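/- Let a, b, c, d, e be integers with a ≠ 0 and d ≠ 0, and let K be a field of characteristic zero containing ℚ (e.g. K = ℚ). For every nonzero T ∈ K one has the identity a^4 T^2 (f(T)^2 + g(dT/a)^2) = (T+a)^2 (T+c)^2 ((a^4 + d^4) T^2 + (2a^4 b + 2a d^3 e) T + a^2 (a^2 b^2 + d^2 e^2)), where f(x) = (x+a)(x+b)(x+c)/x and g(y) = (y+d)(y+e)(y + cd/a)/y. -/

import Mathlib

set_option maxHeartbeats 1000000


/-- The identity `a^4 T^2 (f(T)^2 + g(dT/a)^2) = (T+a)^2 (T+c)^2 ((a^4+d^4)T^2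
+ (2a^4 b + 2a d^3 e) T + a^2(a^2 b^2 + d^2 e^2))` from the proof of
Theorem 1.3 of Zhang–Zargar. -/
theorem stmt10 (a b c d e : ℤ) (ha : a ≠ 0) (hd : d ≠ 0)
    (K : Type*) [Field K] [CharZero K] (T : K) (hT : T ≠ 0) :
    (a : K) ^ 4 * T ^ 2 *
        (((T + a) * (T + b) * (T + c) / T) ^ 2
          + ((d * T / a + d) * (d * T / a + e) * (d * T / a + c * d / a)
              / (d * T / a)) ^ 2) =
      (T + a) ^ 2 * (T + c) ^ 2 *
        ((a ^ 4 + d ^ 4) * T ^ 2 + (2 * a ^ 4 * b + 2 * a * d ^ 3 * e) * T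
          + a ^ 2 * (a ^ 2 * b ^ 2 + d ^ 2 * e ^ 2)) := by
  have ha' : (a:K) ≠ 0 := Int.cast_ne_zero.mpr ha
  have hd' : (d:K) ≠ 0 := Int.cast_ne_zero.mpr hd
  have hg : ((d:K) * T / a + d) * (d * T / a + e) * (d * T / a + c * d / a)
      / (d * T / a)
      = ((d:K)*T + d*a) * (d*T + e*a) * (d*T + c*d) / (a^2 * (d*T)) := by
    field_simp
  rw [hg]
  field_simp
  ring
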